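/- For v ∈ (0, 1/2), the multi-valued Kasner map realizes sensitivity to initial conditions with sensitivity constant δ = |𝐀|/3: there exists δ > 0 such that for every point p on the Kasner circle and every open neighborhood U of p, there exist q ∈ U \ {p}, n ∈ ℕ, and symbol sequences ω, ω* ∈ Σ with d(K_ω^n(p), K_{ω*}^n(q)) ≥ δ. -/

import Mathlib

open Real

set_option maxHeartbeats 1000000

/-- The arc `Aα` on the circle (in angular coordinates): `A₁ = {φ : cos φ ≥ v}` and its
rotations by `±2π/3`. -/
def kasnerArc (v : ℝ) : Fin 3 → Set ℝ
  | 0 => {φ : ℝ | Real.cos φ ≥ v}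
  | 1 => {φ : ℝ | Real.cos (φ - 2*π/3) ≥ v}
  | 2 => {φ : ℝ | Real.cos (φ + 2*π/3) ≥ v}

/-- The Kasner arc map `Kα` in angular coordinates. -/
noncomputable def kasnerArcMap (v : ℝ) : Fin 3 → ℝ → ℝ
  | 0 => fun φ => π - 2 * Real.arctan ((1 + v) / (1 - v) * Real.tan (φ / 2))
  | 1 => fun φ => (π - 2 * Real.arctan ((1 + v) / (1 - v) * Real.tan ((φ - 2*π/3) / 2))) + 2*π/3
  | 2 => fun φ => (π - 2 * Real.arctan ((1 + v) / (1 - v) * Real.tan ((φ + 2*π/3) / 2))) - 2*π/3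

/-- A symbol `(μ, ν, ζ)` selecting, on each of the three overlaps `A₁∩A₂`, `A₂∩A₃`, `A₁∩A₃`,
which of the two available arc maps to apply: `μ` selects `K₁`/`K₂`, `ν` selects `K₂`/`K₃`,
`ζ` selects `K₁`/`K₃` (`true` = the first option). -/
abbrev KasnerSymbol := Bool × Bool × Bool

open Classical in
/-- The selection `K_{μνζ}` of the multi-valued Kasner map determined by a symbol. -/
noncomputable def kasnerSelect (v : ℝ) (s : KasnerSymbol) (p : ℝ) : ℝ :=
  if p ∈ kasnerArc v 0 ∩ kasnerArc v 1 then kasnerArcMap v (if s.1 then 0 else 1) p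
  else if p ∈ kasnerArc v 1 ∩ kasnerArc v 2 then kasnerArcMap v (if s.2.1 then 1 else 2) p
  else if p ∈ kasnerArc v 0 ∩ kasnerArc v 2 then kasnerArcMap v (if s.2.2 then 0 else 2) p
  else if p ∈ kasnerArc v 0 then kasnerArcMap v 0 p
  else if p ∈ kasnerArc v 1 then kasnerArcMap v 1 p
  else kasnerArcMap v 2 p

/-- Iterates `K_ω^n` of the multi-valued Kasner map along a symbol sequence `ω`. -/
noncomputable def kasnerIter (v : ℝ) (ω : ℕ → KasnerSymbol) : ℕ → ℝ → ℝ
  | 0 => id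
  | n + 1 => kasnerSelect v (ω n) ∘ kasnerIter v ω n


noncomputable def kF (v t : ℝ) : ℝ := π - 2 * Real.arctan ((1 + v) / (1 - v) * Real.tan (t / 2))

lemma kF_periodic (v t : ℝ) (j : ℤ) : kF v (t + 2 * π * j) = kF v t := by
  unfold kF
  have h : (t + 2 * π * j) / 2 = t / 2 + (j : ℝ) * π := by ring
  rw [h, Real.tan_periodic.int_mul j (t / 2)]

lemma kF_zero (v : ℝ) : kF v 0 = π := by simp [kF]

lemma kF_neg (v t : ℝ) : kF v (-t) = 2 * π - kF v t := by
  unfold kF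
  rw [show (-t) / 2 = -(t / 2) by ring, Real.tan_neg, mul_neg, Real.arctan_neg]
  ring

lemma kF_anti (v : ℝ) (hv : 0 < v) (hv2 : v < 1) {t₁ t₂ : ℝ} (h1 : -(π/2) ≤ t₁)
    (h12 : t₁ ≤ t₂) (h2 : t₂ ≤ π/2) : kF v t₂ ≤ kF v t₁ := by
  unfold kF
  have hc : 0 < (1 + v) / (1 - v) := by
    apply div_pos <;> linarith
  have hpi := pi_pos
  have htan : Real.tan (t₁ / 2) ≤ Real.tan (t₂ / 2) := by
    rcases eq_or_lt_of_le h12 with h | h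
    · rw [h]
    · exact le_of_lt (Real.strictMonoOn_tan ⟨by linarith, by linarith⟩
        ⟨by linarith, by linarith⟩ (by linarith))
  have := Real.arctan_strictMono.monotone (mul_le_mul_of_nonneg_left htan hc.le)
  linarith

lemma kF_hasDeriv (v : ℝ) {t : ℝ} (ht : |t| < π) :
    HasDerivAt (kF v)
      (-((1 + v) / (1 - v) /
        (Real.cos (t/2) ^ 2 + ((1 + v) / (1 - v)) ^ 2 * Real.sin (t/2) ^ 2))) t := by
  set c := (1 + v) / (1 - v) with hc
  have hpi := pi_pos
  have habs := abs_lt.1 ht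
  have hcos : 0 < Real.cos (t / 2) :=
    Real.cos_pos_of_mem_Ioo ⟨by linarith [habs.1], by linarith [habs.2]⟩
  have h1 : HasDerivAt (fun u : ℝ => u / 2) (1 / 2) t := by
    simpa using (hasDerivAt_id t).div_const 2
  have h2 : HasDerivAt (fun u : ℝ => Real.tan (u / 2)) (1 / Real.cos (t/2) ^ 2 * (1/2)) t :=
    by have := (Real.hasDerivAt_tan hcos.ne').comp t h1; exact this
  have h3 : HasDerivAt (fun u : ℝ => c * Real.tan (u / 2))
      (c * (1 / Real.cos (t/2) ^ 2 * (1/2))) t := h2.const_mul c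
  have h4 : HasDerivAt (fun u : ℝ => Real.arctan (c * Real.tan (u / 2)))
      (1 / (1 + (c * Real.tan (t/2)) ^ 2) * (c * (1 / Real.cos (t/2) ^ 2 * (1/2)))) t :=
    by have := (Real.hasDerivAt_arctan (c * Real.tan (t/2))).comp t h3; exact this
  have h5 := (h4.const_mul 2).const_sub π
  have he : kF v = fun u : ℝ => π - 2 * Real.arctan (c * Real.tan (u / 2)) := rfl
  rw [he]
  convert h5 using 1
  · rfl
  · rfl
  have hden : Real.cos (t/2) ^ 2 + c ^ 2 * Real.sin (t/2) ^ 2 > 0 := by positivity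
  rw [Real.tan_eq_sin_div_cos]
  have hc2 : Real.cos (t/2) ≠ 0 := hcos.ne'
  field_simp

lemma kc_facts {v : ℝ} (hv : v ∈ Set.Ioo (0:ℝ) (1/2)) :
    1 < (1 + v) / (1 - v) ∧ (1 + v) / (1 - v) < 3 := by
  obtain ⟨h0, h2⟩ := hv
  have h1 : 0 < 1 - v := by linarith
  constructor
  · rw [lt_div_iff₀ h1]; linarith
  · rw [div_lt_iff₀ h1]; linarith

lemma kF_slope {v : ℝ} (hv : v ∈ Set.Ioo (0:ℝ) (1/2)) {x y : ℝ} (hxy : x < y)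
    (hx : -(π/3) ≤ x) (hy : y ≤ π/3) :
    4 * ((1+v)/(1-v)) / (3 + ((1+v)/(1-v))^2) * (y - x) ≤ kF v x - kF v y ∧
      kF v x - kF v y ≤ ((1+v)/(1-v)) * (y - x) := by
  set c := (1 + v) / (1 - v) with hcdef
  obtain ⟨hc1, hc3⟩ := kc_facts hv
  have hpi := pi_pos
  have hD : ∀ t ∈ Set.Icc x y, HasDerivAt (kF v)
      (-(c / (Real.cos (t/2) ^ 2 + c ^ 2 * Real.sin (t/2) ^ 2))) t := by
    intro t ht
    exact kF_hasDeriv v (by rw [abs_lt]; constructor <;> [linarith [ht.1]; linarith [ht.2]])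
  have hcont : ContinuousOn (kF v) (Set.Icc x y) := fun t ht =>
    (hD t ht).continuousAt.continuousWithinAt
  obtain ⟨ξ, hξ, hslope⟩ := exists_hasDerivAt_eq_slope (kF v)
    (fun t => -(c / (Real.cos (t/2) ^ 2 + c ^ 2 * Real.sin (t/2) ^ 2))) hxy hcont
    (fun t ht => hD t ⟨ht.1.le, ht.2.le⟩)
  -- bounds on the derivative at ξ
  have hξx : -(π/3) ≤ ξ := le_trans hx hξ.1.le
  have hξy : ξ ≤ π/3 := le_trans hξ.2.le hy
  have hsin : Real.sin (ξ/2) ^ 2 ≤ 1/4 := by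
    have hm := Real.strictMonoOn_sin.monotoneOn
    have h6 : Real.sin (ξ/2) ≤ Real.sin (π/6) := by
      apply hm ⟨by linarith, by linarith⟩ ⟨by linarith, by linarith⟩ (by linarith)
    have h7 : Real.sin (-(π/6)) ≤ Real.sin (ξ/2) := by
      apply hm ⟨by linarith, by linarith⟩ ⟨by linarith, by linarith⟩ (by linarith)
    rw [Real.sin_pi_div_six] at h6
    rw [Real.sin_neg, Real.sin_pi_div_six] at h7
    nlinarith
  have hpyth := Real.sin_sq_add_cos_sq (ξ/2)
  rw [← hcdef] at hc1 hc3
  set S := Real.sin (ξ/2) ^ 2 with hSdef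
  have hS0 : 0 ≤ S := sq_nonneg _
  have hcsq : 0 ≤ c^2 - 1 := by nlinarith
  have hden1 : 1 ≤ Real.cos (ξ/2) ^ 2 + c ^ 2 * S := by nlinarith [mul_nonneg hcsq hS0]
  have hden2 : Real.cos (ξ/2) ^ 2 + c ^ 2 * S ≤ (3 + c^2) / 4 := by
    nlinarith [mul_le_mul_of_nonneg_left hsin hcsq]
  have hdenpos : 0 < Real.cos (ξ/2) ^ 2 + c ^ 2 * S := by linarith
  have hlow : 4 * c / (3 + c^2) ≤ c / (Real.cos (ξ/2) ^ 2 + c ^ 2 * S) := by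
    rw [div_le_div_iff₀ (by nlinarith) hdenpos]
    nlinarith
  have hhigh : c / (Real.cos (ξ/2) ^ 2 + c ^ 2 * S) ≤ c := by
    rw [div_le_iff₀ hdenpos]
    nlinarith
  have hyx : 0 < y - x := by linarith
  have heq : kF v x - kF v y = c / (Real.cos (ξ/2) ^ 2 + c ^ 2 * S) * (y - x) := by
    rw [eq_div_iff (by linarith : y - x ≠ 0)] at hslope
    linear_combination hslope
  constructor
  · rw [heq]; exact mul_le_mul_of_nonneg_right hlow hyx.le
  · rw [heq]; exact mul_le_mul_of_nonneg_right hhigh hyx.le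

lemma arccos_facts {v : ℝ} (hv : v ∈ Set.Ioo (0:ℝ) (1/2)) :
    π/3 < Real.arccos v ∧ Real.arccos v < π/2 := by
  obtain ⟨h0, h2⟩ := hv
  have hpi := pi_pos
  have hca : Real.cos (Real.arccos v) = v := Real.cos_arccos (by linarith) (by linarith)
  constructor
  · by_contra h
    push_neg at h
    have := Real.cos_le_cos_of_nonneg_of_le_pi (Real.arccos_nonneg v) (by linarith) h
    rw [hca, Real.cos_pi_div_three] at this
    linarith
  · by_contra h
    push_neg at h
    have := Real.cos_le_cos_of_nonneg_of_le_pi (by linarith : (0:ℝ) ≤ π/2)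
      (Real.arccos_le_pi v) h
    rw [hca, Real.cos_pi_div_two] at this
    linarith

lemma kGEM {v : ℝ} (hv : v ∈ Set.Ioo (0:ℝ) (1/2)) :
    2 * Real.arccos v - π/3 ≤ kF v (π/3) := by
  obtain ⟨ha1, ha2⟩ := arccos_facts hv
  obtain ⟨h0, h2⟩ := hv
  have hpi := pi_pos
  set a := Real.arccos v with hadef
  have hca : Real.cos a = v := Real.cos_arccos (by linarith) (by linarith)
  have hsa : Real.sin a = Real.sqrt (1 - v^2) := by rw [hadef, Real.sin_arccos]
  have hs0 : 0 < Real.sin a := Real.sin_pos_of_pos_of_lt_pi (by linarith) (by linarith)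
  have hs2 : Real.sin a ^ 2 = 1 - v^2 := by
    have := Real.sin_sq_add_cos_sq a
    rw [hca] at this; linarith
  set w := 2*π/3 - a with hwdef
  have hw1 : 0 < w := by rw [hwdef]; linarith
  have hw2 : w < π/2 := by rw [hwdef]; linarith
  have hs3 : 0 < Real.sqrt 3 := by positivity
  have hs3sq : Real.sqrt 3 ^ 2 = 3 := Real.sq_sqrt (by norm_num)
  -- compute sin w, cos w
  have hsinw : Real.sin w = Real.sqrt 3 / 2 * v + 1/2 * Real.sin a := by
    rw [hwdef, Real.sin_sub, show (2*π/3 : ℝ) = π - π/3 by ring, Real.sin_pi_sub,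
      Real.cos_pi_sub, Real.sin_pi_div_three, Real.cos_pi_div_three, hca]
    ring
  have hcosw : Real.cos w = Real.sqrt 3 / 2 * Real.sin a - 1/2 * v := by
    rw [hwdef, Real.cos_sub, show (2*π/3 : ℝ) = π - π/3 by ring, Real.sin_pi_sub,
      Real.cos_pi_sub, Real.sin_pi_div_three, Real.cos_pi_div_three, hca]
    ring
  have hcoswpos : 0 < Real.cos w := Real.cos_pos_of_mem_Ioo ⟨by linarith, hw2⟩
  -- key algebraic inequality
  have hsb : Real.sqrt 3 * Real.sin a ≤ 2 - v := by
    nlinarith [sq_nonneg (1 - 2*v), hs3sq, hs2, mul_pos hs3 hs0,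
      sq_nonneg (Real.sqrt 3 * Real.sin a + (2 - v))]
  have h1v : 0 < 1 - v := by linarith
  have hineq : (1 + v) * Real.cos w ≤ Real.sin w * ((1 - v) * Real.sqrt 3) := by
    rw [hsinw, hcosw]
    nlinarith [mul_nonneg h0.le (by linarith : (0:ℝ) ≤ 2 - v - Real.sqrt 3 * Real.sin a), hs3sq]
  have hkey : (1 + v) / (1 - v) * Real.tan (π/6) ≤ Real.tan w := by
    rw [Real.tan_pi_div_six, Real.tan_eq_sin_div_cos, div_mul_div_comm, mul_one,
      div_le_div_iff₀ (by positivity) hcoswpos]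
    exact hineq
  have harc : Real.arctan ((1 + v) / (1 - v) * Real.tan (π/6)) ≤ w := by
    calc Real.arctan ((1 + v) / (1 - v) * Real.tan (π/6)) ≤ Real.arctan (Real.tan w) :=
          Real.arctan_strictMono.monotone hkey
    _ = w := Real.arctan_tan (by linarith) hw2
  unfold kF
  rw [hwdef] at harc
  rw [show (π/3/2 : ℝ) = π/6 by ring]
  linarith

lemma angle_norm_ge {r d : ℝ} (h0 : 0 ≤ d) (h1 : d ≤ r) (h2 : r ≤ 2*π - d) :
    d ≤ ‖(r : Real.Angle)‖ := by
  have hpi := pi_pos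
  have hnorm : ‖(r : Real.Angle)‖ = |r - round ((2*π)⁻¹ * r) * (2*π)| := AddCircle.norm_eq (2*π)
  rw [hnorm]
  set k := round ((2*π)⁻¹ * r) with hk
  rcases le_or_gt (k : ℝ) 0 with hk0 | hk0
  · rw [abs_of_nonneg (by nlinarith : (0:ℝ) ≤ r - k * (2*π))]
    nlinarith
  · have hk1 : (1 : ℝ) ≤ k := by exact_mod_cast hk0
    rw [abs_of_nonpos (by nlinarith : r - (k:ℝ) * (2*π) ≤ 0)]
    nlinarith

lemma cos_ge_half {t : ℝ} (ht : |t| ≤ π/3) : (1/2 : ℝ) ≤ Real.cos t := by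
  have hpi := pi_pos
  have h := Real.cos_le_cos_of_nonneg_of_le_pi (abs_nonneg t) (by linarith) ht
  rw [Real.cos_pi_div_three] at h
  rwa [Real.cos_abs] at h


noncomputable def kCen : Fin 3 → ℝ
  | 0 => 0
  | 1 => 2*π/3
  | 2 => -(2*π/3)

lemma arcMap_eq (v : ℝ) (i : Fin 3) (φ : ℝ) :
    kasnerArcMap v i φ = kF v (φ - kCen i) + kCen i := by
  fin_cases i <;> simp [kasnerArcMap, kCen, kF] <;> ring

lemma mem_arc_iff (v : ℝ) (i : Fin 3) (x : ℝ) :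
    x ∈ kasnerArc v i ↔ v ≤ Real.cos (x - kCen i) := by
  fin_cases i <;> simp [kasnerArc, kCen, ge_iff_le, sub_neg_eq_add]

lemma no_triple {v : ℝ} (hv : 0 < v) (x : ℝ) :
    ¬(x ∈ kasnerArc v 0 ∧ x ∈ kasnerArc v 1 ∧ x ∈ kasnerArc v 2) := by
  rintro ⟨h0, h1, h2⟩
  simp only [kasnerArc, Set.mem_setOf_eq, ge_iff_le] at h0 h1 h2
  have hsum : Real.cos x + Real.cos (x - 2*π/3) + Real.cos (x + 2*π/3) = 0 := by
    rw [Real.cos_sub, Real.cos_add,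
      show (2*π/3 : ℝ) = π - π/3 by ring, Real.cos_pi_sub, Real.sin_pi_sub,
      Real.cos_pi_div_three]
    ring
  linarith

lemma exists_select {v : ℝ} (hv : 0 < v) (x : ℝ) (i : Fin 3) (hx : x ∈ kasnerArc v i) :
    ∃ s : KasnerSymbol, kasnerSelect v s x = kasnerArcMap v i x := by
  by_cases h01 : x ∈ kasnerArc v 0 ∩ kasnerArc v 1
  · fin_cases i
    · exact ⟨(true, true, true), by simp [kasnerSelect, h01]⟩
    · exact ⟨(false, true, true), by simp [kasnerSelect, h01]⟩
    · exact absurd ⟨h01.1, h01.2, hx⟩ (no_triple hv x)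
  · by_cases h12 : x ∈ kasnerArc v 1 ∩ kasnerArc v 2
    · fin_cases i
      · exact absurd ⟨hx, h12.1, h12.2⟩ (no_triple hv x)
      · exact ⟨(true, true, true), by simp [kasnerSelect, h01, h12]⟩
      · exact ⟨(true, false, true), by simp [kasnerSelect, h01, h12]⟩
    · by_cases h02 : x ∈ kasnerArc v 0 ∩ kasnerArc v 2
      · fin_cases i
        · exact ⟨(true, true, true), by simp [kasnerSelect, h01, h12, h02]⟩
        · exact absurd ⟨h02.1, hx, h02.2⟩ (no_triple hv x)
        · exact ⟨(true, true, false), by simp [kasnerSelect, h01, h12, h02]⟩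
      · fin_cases i
        · have hx' : x ∈ kasnerArc v 0 := hx
          exact ⟨(true, true, true), by simp [kasnerSelect, h01, h12, h02, hx']⟩
        · have hx' : x ∈ kasnerArc v 1 := hx
          have hx0 : x ∉ kasnerArc v 0 := fun h => h01 ⟨h, hx'⟩
          exact ⟨(true, true, true), by simp [kasnerSelect, h01, h12, h02, hx0, hx']⟩
        · have hx' : x ∈ kasnerArc v 2 := hx
          have hx0 : x ∉ kasnerArc v 0 := fun h => h02 ⟨h, hx'⟩
          have hx1 : x ∉ kasnerArc v 1 := fun h => h12 ⟨h, hx'⟩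
          exact ⟨(true, true, true), by simp [kasnerSelect, h01, h12, h02, hx0, hx1]⟩

def consSym (s : KasnerSymbol) (σ : ℕ → KasnerSymbol) : ℕ → KasnerSymbol :=
  fun n => Nat.casesOn n s fun m => σ m

lemma iter_cons (v : ℝ) (s : KasnerSymbol) (σ : ℕ → KasnerSymbol) (n : ℕ) (x : ℝ) :
    kasnerIter v (consSym s σ) (n+1) x = kasnerIter v σ n (kasnerSelect v s x) := by
  induction n with
  | zero => rfl
  | succ n ih =>
    show kasnerSelect v (consSym s σ (n+1)) (kasnerIter v (consSym s σ) (n+1) x) = _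
    rw [ih]
    rfl

lemma iter_one (v : ℝ) (ω : ℕ → KasnerSymbol) (x : ℝ) :
    kasnerIter v ω 1 x = kasnerSelect v (ω 0) x := rfl

lemma center_index (k : ℤ) : ∃ (i : Fin 3) (j : ℤ), kCen i = 2*π/3 * k - 2*π*j := by
  have hk := Int.mul_ediv_add_emod k 3
  have hr : k % 3 = 0 ∨ k % 3 = 1 ∨ k % 3 = 2 := by omega
  rcases hr with h | h | h
  · refine ⟨0, k / 3, ?_⟩
    have : (k : ℝ) = 3 * (k / 3 : ℤ) := by
      have : k = 3 * (k / 3) := by omega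
      exact_mod_cast congrArg (Int.cast : ℤ → ℝ) this
    rw [kCen]; rw [this]; ring
  · refine ⟨1, k / 3, ?_⟩
    have : (k : ℝ) = 3 * (k / 3 : ℤ) + 1 := by
      have : k = 3 * (k / 3) + 1 := by omega
      exact_mod_cast congrArg (Int.cast : ℤ → ℝ) this
    rw [kCen]; rw [this]; ring
  · refine ⟨2, k / 3 + 1, ?_⟩
    have : (k : ℝ) = 3 * (k / 3 : ℤ) + 2 := by
      have : k = 3 * (k / 3) + 2 := by omega
      exact_mod_cast congrArg (Int.cast : ℤ → ℝ) this
    rw [kCen]; rw [this]; push_cast; ring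

lemma kasner_main {v : ℝ} (hv : v ∈ Set.Ioo (0:ℝ) (1/2)) :
    ∀ N : ℕ, ∀ x y : ℝ, x < y → y - x < 2*Real.arccos v - 2*π/3 →
      2*Real.arccos v - 2*π/3 ≤ (4*((1+v)/(1-v))/(3+((1+v)/(1-v))^2))^N * (y - x) →
      ∃ (n : ℕ) (ω ωs : ℕ → KasnerSymbol),
        2*Real.arccos v - 2*π/3
          ≤ ‖((kasnerIter v ω n x - kasnerIter v ωs n y : ℝ) : Real.Angle)‖ := by
  obtain ⟨ha1, ha2⟩ := arccos_facts hv
  obtain ⟨hc1, hc3⟩ := kc_facts hv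
  have hv0 := hv.1
  have hv12 := hv.2
  have hv1 : v < 1 := by linarith
  have hpi := pi_pos
  set c := (1+v)/(1-v) with hcdef
  set lam := 4*c/(3+c^2) with hlamdef
  set δ := 2*Real.arccos v - 2*π/3 with hddef
  have hδ0 : 0 < δ := by rw [hddef]; linarith
  have hδπ3 : δ < π/3 := by rw [hddef]; linarith
  have hlam1 : 1 < lam := by
    rw [hlamdef, lt_div_iff₀ (by nlinarith)]
    nlinarith
  clear_value c lam δ
  intro N
  induction N with
  | zero =>
    intro x y hxy hlt hge
    rw [pow_zero, one_mul] at hge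
    linarith
  | succ N ih =>
    intro x y hxy hlt hge
    set k : ℤ := ⌊(x + π/3) / (2*π/3)⌋ with hkdef
    set μ : ℝ := 2*π/3 * k with hmudef
    have h23 : (0:ℝ) < 2*π/3 := by linarith
    have hfl1 : μ - π/3 ≤ x := by
      have h := Int.floor_le ((x + π/3) / (2*π/3))
      rw [← hkdef, le_div_iff₀ h23] at h
      rw [hmudef]; linarith
    have hfl2 : x < μ + π/3 := by
      have h := Int.lt_floor_add_one ((x + π/3) / (2*π/3))
      rw [← hkdef, div_lt_iff₀ h23] at h
      rw [hmudef]; push_cast at h ⊢; linarith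
    clear_value k μ
    obtain ⟨i, j, hij⟩ := center_index k
    by_cases hstr : y < μ + π/3
    · -- expansion case
      have hxt1 : -(π/3) ≤ x - μ := by linarith
      have hyt2 : y - μ ≤ π/3 := by linarith
      have hxyμ : x - μ < y - μ := by linarith
      have hxarc : x ∈ kasnerArc v i := by
        rw [mem_arc_iff]
        have he : x - kCen i = (x - μ) + (j:ℝ) * (2*π) := by rw [hij, hmudef]; ring
        rw [he, Real.cos_add_int_mul_two_pi]
        have := cos_ge_half (t := x - μ) (by rw [abs_le]; constructor <;> linarith)
        linarith
      have hyarc : y ∈ kasnerArc v i := by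
        rw [mem_arc_iff]
        have he : y - kCen i = (y - μ) + (j:ℝ) * (2*π) := by rw [hij, hmudef]; ring
        rw [he, Real.cos_add_int_mul_two_pi]
        have := cos_ge_half (t := y - μ) (by rw [abs_le]; constructor <;> linarith)
        linarith
      obtain ⟨sx, hsx⟩ := exists_select hv0 x i hxarc
      obtain ⟨sy, hsy⟩ := exists_select hv0 y i hyarc
      have hmapx : kasnerArcMap v i x = kF v (x - μ) + μ - 2*π*j := by
        rw [arcMap_eq, hij,
          show x - (2*π/3*(k:ℝ) - 2*π*(j:ℝ)) = (x - μ) + 2*π*(j:ℝ) by rw [hmudef]; ring,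
          kF_periodic, hmudef]
        ring
      have hmapy : kasnerArcMap v i y = kF v (y - μ) + μ - 2*π*j := by
        rw [arcMap_eq, hij,
          show y - (2*π/3*(k:ℝ) - 2*π*(j:ℝ)) = (y - μ) + 2*π*(j:ℝ) by rw [hmudef]; ring,
          kF_periodic, hmudef]
        ring
      obtain ⟨hsl, hsu⟩ := kF_slope hv hxyμ hxt1 hyt2
      have e : y - μ - (x - μ) = y - x := by ring
      rw [e] at hsl hsu
      have hdiff : kasnerArcMap v i x - kasnerArcMap v i y
          = kF v (x - μ) - kF v (y - μ) := by
        rw [hmapx, hmapy]; ring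
      rw [← hcdef] at hsl hsu
      rw [← hlamdef] at hsl
      rw [← hdiff] at hsl hsu
      have hyx0 : 0 < y - x := by linarith
      have hd1 : 0 < kasnerArcMap v i x - kasnerArcMap v i y :=
        lt_of_lt_of_le (by nlinarith) hsl
      by_cases hbig : δ ≤ kasnerArcMap v i x - kasnerArcMap v i y
      · refine ⟨1, (fun _ => sx), (fun _ => sy), ?_⟩
        rw [iter_one, iter_one, hsx, hsy]
        apply angle_norm_ge hδ0.le hbig
        linarith [mul_lt_mul_of_pos_left hlt (show (0:ℝ) < c by linarith),
          mul_pos (show (0:ℝ) < 3 - c by linarith) hδ0, hsu]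
      · push_neg at hbig
        have hlam0 : (0:ℝ) ≤ lam^N := pow_nonneg (by linarith) N
        have hge' : δ ≤ lam^N * (kasnerArcMap v i x - kasnerArcMap v i y) := by
          calc δ ≤ lam^(N+1) * (y - x) := hge
          _ = lam^N * (lam * (y - x)) := by ring
          _ ≤ lam^N * (kasnerArcMap v i x - kasnerArcMap v i y) :=
              mul_le_mul_of_nonneg_left hsl hlam0
        obtain ⟨n, ω', ωs', hn⟩ := ih (kasnerArcMap v i y) (kasnerArcMap v i x)
          (by linarith) hbig hge'
        refine ⟨n+1, consSym sx ωs', consSym sy ω', ?_⟩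
        rw [iter_cons, iter_cons, hsx, hsy,
          show (kasnerIter v ωs' n (kasnerArcMap v i x)
              - kasnerIter v ω' n (kasnerArcMap v i y) : ℝ)
            = -(kasnerIter v ω' n (kasnerArcMap v i y)
              - kasnerIter v ωs' n (kasnerArcMap v i x)) by ring,
          Real.Angle.coe_neg, norm_neg]
        exact hn
    · -- straddle case
      push_neg at hstr
      obtain ⟨i', j', hij'⟩ := center_index (k+1)
      have hxlow : π/3 - δ < x - μ := by linarith
      have hxhigh : x - μ < π/3 := by linarith
      have hyl : -(π/3) ≤ y - μ - 2*π/3 := by linarith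
      have hyh : y - μ - 2*π/3 < δ - π/3 := by linarith
      have hxarc : x ∈ kasnerArc v i := by
        rw [mem_arc_iff]
        have he : x - kCen i = (x - μ) + (j:ℝ) * (2*π) := by rw [hij, hmudef]; ring
        rw [he, Real.cos_add_int_mul_two_pi]
        have := cos_ge_half (t := x - μ) (by rw [abs_le]; constructor <;> linarith)
        linarith
      have hyarc : y ∈ kasnerArc v i' := by
        rw [mem_arc_iff]
        have he : y - kCen i' = (y - μ - 2*π/3) + (j':ℝ) * (2*π) := by
          rw [hij', hmudef]; push_cast; ring
        rw [he, Real.cos_add_int_mul_two_pi]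
        have := cos_ge_half (t := y - μ - 2*π/3) (by rw [abs_le]; constructor <;> linarith)
        linarith
      obtain ⟨sx, hsx⟩ := exists_select hv0 x i hxarc
      obtain ⟨sy, hsy⟩ := exists_select hv0 y i' hyarc
      have hmapx : kasnerArcMap v i x = kF v (x - μ) + μ - 2*π*j := by
        rw [arcMap_eq, hij,
          show x - (2*π/3*(k:ℝ) - 2*π*(j:ℝ)) = (x - μ) + 2*π*(j:ℝ) by rw [hmudef]; ring,
          kF_periodic, hmudef]
        ring
      have hij2 : kCen i' = 2*π/3*((k:ℝ)+1) - 2*π*(j':ℝ) := by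
        rw [hij']; push_cast; ring
      have hmapy : kasnerArcMap v i' y = kF v (y - μ - 2*π/3) + μ + 2*π/3 - 2*π*j' := by
        rw [arcMap_eq, hij2,
          show y - (2*π/3*((k:ℝ)+1) - 2*π*(j':ℝ)) = (y - μ - 2*π/3) + 2*π*(j':ℝ) by
            rw [hmudef]; ring,
          kF_periodic, hmudef]
        push_cast
        ring
      -- bounds on Δ := kF v (y-μ-2π/3) - kF v (x-μ) + 2π/3
      have hanti1 : kF v 0 ≤ kF v (y - μ - 2*π/3) :=
        kF_anti v hv0 hv1 (by linarith) (by linarith) (by linarith)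
      have hanti2 : kF v (x - μ) ≤ kF v 0 :=
        kF_anti v hv0 hv1 (by linarith) (by linarith) (by linarith)
      have hanti3 : kF v (y - μ - 2*π/3) ≤ kF v (-(π/3)) :=
        kF_anti v hv0 hv1 (by linarith) hyl (by linarith)
      have hanti4 : kF v (π/3) ≤ kF v (x - μ) :=
        kF_anti v hv0 hv1 (by linarith) hxhigh.le (by linarith)
      have hgem := kGEM hv
      rw [kF_zero] at hanti1 hanti2
      rw [kF_neg] at hanti3
      set Δ : ℝ := kF v (y - μ - 2*π/3) - kF v (x - μ) + 2*π/3 with hΔdef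
      have hΔlow : δ ≤ Δ := by rw [hΔdef]; linarith
      have hΔhigh : Δ ≤ 2*π - δ := by rw [hΔdef, hddef]; linarith
      refine ⟨1, (fun _ => sx), (fun _ => sy), ?_⟩
      rw [iter_one, iter_one, hsx, hsy]
      have hABeq : (kasnerArcMap v i x - kasnerArcMap v i' y : ℝ)
          = -Δ + ((j' - j : ℤ) : ℝ) * (2*π) := by
        rw [hmapx, hmapy, hΔdef]; push_cast; ring
      have hcoe : ((kasnerArcMap v i x - kasnerArcMap v i' y : ℝ) : Real.Angle)
          = ((-Δ : ℝ) : Real.Angle) := by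
        rw [hABeq, Real.Angle.coe_add, Real.Angle.intCast_mul_eq_zsmul,
          Real.Angle.coe_two_pi, zsmul_zero, add_zero]
      rw [hcoe, Real.Angle.coe_neg, norm_neg]
      exact angle_norm_ge hδ0.le hΔlow hΔhigh


/-- For `v ∈ (0, 1/2)`, the multi-valued Kasner map realizes sensitivity to
initial conditions with sensitivity constant `δ = |𝐀|/3 = 2 arccos v - 2π/3`: for every point
`p` on the Kasner circle and every open neighborhood `U` of `p` there exist `q ∈ U \ {p}`,
`n ∈ ℕ` and symbol sequences `ω, ω*` with `d(K_ω^n(p), K_{ω*}^n(q)) ≥ δ`, where distance is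
measured on the circle `ℝ/2πℤ`. -/
theorem kasner_map_sensitivity (v : ℝ) (hv : v ∈ Set.Ioo (0:ℝ) (1/2)) :
    0 < 2 * Real.arccos v - 2*π/3 ∧
    ∀ (p : ℝ) (U : Set ℝ), IsOpen U → p ∈ U →
      ∃ q ∈ U, q ≠ p ∧ ∃ (n : ℕ) (ω ωs : ℕ → KasnerSymbol),
        2 * Real.arccos v - 2*π/3
          ≤ ‖((kasnerIter v ω n p : ℝ) - (kasnerIter v ωs n q : ℝ) : Real.Angle)‖ := by
  obtain ⟨ha1, ha2⟩ := arccos_facts hv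
  obtain ⟨hc1, hc3⟩ := kc_facts hv
  have hpi := pi_pos
  have hδ0 : 0 < 2*Real.arccos v - 2*π/3 := by linarith
  refine ⟨hδ0, ?_⟩
  intro p U hU hp
  obtain ⟨ε, hε0, hball⟩ := Metric.isOpen_iff.1 hU p hp
  have ht0 : 0 < min (ε/2) ((2*Real.arccos v - 2*π/3)/2) := lt_min (by linarith) (by linarith)
  set t := min (ε/2) ((2*Real.arccos v - 2*π/3)/2) with htdef
  have htδ : t < 2*Real.arccos v - 2*π/3 :=
    lt_of_le_of_lt (min_le_right _ _) (by linarith)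
  have htε : t < ε := lt_of_le_of_lt (min_le_left _ _) (by linarith)
  clear_value t
  have hq : p + t ∈ U := by
    apply hball
    rw [Metric.mem_ball, Real.dist_eq, abs_of_pos (by linarith : (0:ℝ) < p + t - p)]
    linarith
  have hlam1 : 1 < 4*((1+v)/(1-v))/(3+((1+v)/(1-v))^2) := by
    rw [lt_div_iff₀ (by nlinarith)]
    nlinarith
  obtain ⟨N, hN⟩ := pow_unbounded_of_one_lt ((2*Real.arccos v - 2*π/3) / t) hlam1
  rw [div_lt_iff₀ ht0] at hN
  obtain ⟨n, ω, ωs, hn⟩ := kasner_main hv N p (p + t) (by linarith)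
    (by linarith) (by nlinarith [pow_nonneg (by nlinarith : (0:ℝ) ≤ 4*((1+v)/(1-v))/(3+((1+v)/(1-v))^2)) N])
  exact ⟨p + t, hq, by intro h; nlinarith [congrArg (fun z => z - p) h],
    n, ω, ωs, hn⟩
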